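/- arXiv:1305.1062 — 2 statements merged into one kernel-verified Lean document; each statement's English description precedes it below -/
import Mathlib

section
/- Let U be an n × n upper triangular integer matrix with diagonal entries λ_1, 1, 1, …, 1 where λ_1 ≠ 0. Then the direct limit lim→(U, ℤ^n) is isomorphic to ℤ[1/λ_1] ⊕ ℤ^{n−1}. -/
/-- `ℤ[1/d] = ⋃ᵢ (1/dⁱ)ℤ`, the subgroup of ℚ generated by the powers `1/dⁱ`. -/
def Zinv (d : ℤ) : AddSubgroup ℚ :=
  AddSubgroup.closure {q : ℚ | ∃ i : ℕ, q = ((d : ℚ) ^ i)⁻¹}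

lemma mem_Zinv_iff {d : ℤ} (hd : d ≠ 0) {q : ℚ} :
    q ∈ Zinv d ↔ ∃ (i : ℕ) (k : ℤ), q = (k : ℚ) / (d : ℚ) ^ i := by
  have hdq : (d : ℚ) ≠ 0 := Int.cast_ne_zero.mpr hd
  constructor
  · intro h
    refine AddSubgroup.closure_induction ?_ ?_ ?_ ?_ h
    · rintro x ⟨i, rfl⟩
      exact ⟨i, 1, by rw [inv_eq_one_div]; norm_num⟩
    · exact ⟨0, 0, by simp⟩
    · rintro a b - - ⟨i, k, rfl⟩ ⟨j, l, rfl⟩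
      refine ⟨i + j, k * d ^ j + l * d ^ i, ?_⟩
      rw [div_add_div _ _ (pow_ne_zero i hdq) (pow_ne_zero j hdq), ← pow_add]
      push_cast
      ring_nf
    · rintro a - ⟨i, k, rfl⟩
      exact ⟨i, -k, by push_cast; ring⟩
  · rintro ⟨i, k, rfl⟩
    have h1 : ((d : ℚ) ^ i)⁻¹ ∈ Zinv d := AddSubgroup.subset_closure ⟨i, rfl⟩
    have := AddSubgroup.zsmul_mem _ h1 k
    simpa [div_eq_mul_inv, zsmul_eq_mul] using this

/-- If `U` is an upper triangular integer matrix with diagonal `(λ₁,1,…,1)`, `λ₁ ≠ 0`,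
then `lim→(U,ℤⁿ) ≅ ℤ[1/λ₁] ⊕ ℤⁿ⁻¹`. -/
theorem directLimit_upper_triangular_ones
    (m : ℕ) (U : Matrix (Fin (m + 1)) (Fin (m + 1)) ℤ)
    (hUt : ∀ i j : Fin (m + 1), j < i → U i j = 0)
    (h1 : ∀ i : Fin (m + 1), i ≠ 0 → U i i = 1)
    (h0 : U 0 0 ≠ 0) :
    Nonempty
      ((Module.DirectLimit (fun _ : ℕ => Fin (m + 1) → ℤ)
          (fun i j _ => (U.mulVecLin ^ (j - i) :
            (Fin (m + 1) → ℤ) →ₗ[ℤ] (Fin (m + 1) → ℤ))))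
        ≃+ (Zinv (U 0 0) × (Fin m → ℤ))) := by
  classical
  have hd : ((U 0 0 : ℤ) : ℚ) ≠ 0 := Int.cast_ne_zero.mpr h0
  -- the matrix over ℚ
  set W : Matrix (Fin (m + 1)) (Fin (m + 1)) ℚ := U.map Int.cast with hW
  have hWdet : W.det = (U 0 0 : ℚ) := by
    have ht : W.BlockTriangular id := by
      intro i j hij
      simp [hW, Matrix.map_apply, hUt i j hij]
    have hdiag : ∀ j : Fin m, W j.succ j.succ = 1 := by
      intro j
      simp [hW, Matrix.map_apply, h1 _ (Fin.succ_ne_zero j)]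
    rw [Matrix.det_of_upperTriangular ht, Fin.prod_univ_succ,
      Finset.prod_congr rfl (fun j _ => hdiag j), Finset.prod_const_one, mul_one]
    simp [hW, Matrix.map_apply]
  have hWu : IsUnit W.det := by rw [hWdet]; exact isUnit_iff_ne_zero.mpr hd
  -- the automorphism of ℚ^(m+1) given by W
  set e : (Fin (m + 1) → ℚ) ≃ₗ[ℚ] (Fin (m + 1) → ℚ) :=
    LinearEquiv.ofLinear W.mulVecLin W⁻¹.mulVecLin
      (by rw [← Matrix.mulVecLin_mul, Matrix.mul_nonsing_inv _ hWu, Matrix.mulVecLin_one])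
      (by rw [← Matrix.mulVecLin_mul, Matrix.nonsing_inv_mul _ hWu, Matrix.mulVecLin_one])
    with he_def
  have he : ∀ x, e x = W.mulVec x := fun _ => rfl
  have hmul : ∀ (a b : (Fin (m + 1) → ℚ) ≃ₗ[ℚ] (Fin (m + 1) → ℚ)) v,
      (a * b) v = a (b v) := fun _ _ _ => rfl
  have hone : ∀ v : Fin (m + 1) → ℚ,
      (1 : (Fin (m + 1) → ℚ) ≃ₗ[ℚ] (Fin (m + 1) → ℚ)) v = v := fun _ => rfl
  have hinvdef : (e⁻¹ : (Fin (m + 1) → ℚ) ≃ₗ[ℚ] (Fin (m + 1) → ℚ)) = e.symm := rfl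
  -- coercion ℤ^(m+1) → ℚ^(m+1)
  set coeV : (Fin (m + 1) → ℤ) →ₗ[ℤ] (Fin (m + 1) → ℚ) :=
    LinearMap.compLeft ((Int.castAddHom ℚ).toIntLinearMap) (Fin (m + 1)) with hcoeV
  have hcoe : ∀ (x : Fin (m + 1) → ℤ) (j : Fin (m + 1)), coeV x j = (x j : ℚ) :=
    fun _ _ => rfl
  have hcast : ∀ x : Fin (m + 1) → ℤ, coeV (U.mulVecLin x) = e (coeV x) := by
    intro x
    funext i
    rw [he]
    show ((U.mulVec x i : ℤ) : ℚ) = W.mulVec (fun j => (x j : ℚ)) i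
    simp only [Matrix.mulVec, dotProduct, hW, Matrix.map_apply]
    push_cast
    rfl
  have hcastp : ∀ (p : ℕ) (x : Fin (m + 1) → ℤ),
      coeV ((U.mulVecLin ^ p) x) = (e ^ p) (coeV x) := by
    intro p
    induction p with
    | zero => intro x; simp
    | succ p ih =>
      intro x
      rw [pow_succ, pow_succ, Module.End.mul_apply, hmul, ← hcast, ih]
  -- the compatible family of maps to ℚ^(m+1)
  set g : ∀ _ : ℕ, (Fin (m + 1) → ℤ) →ₗ[ℤ] (Fin (m + 1) → ℚ) :=
    fun i => ((e⁻¹ ^ i : (Fin (m + 1) → ℚ) ≃ₗ[ℚ] (Fin (m + 1) → ℚ)).toLinearMap.restrictScalars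
      ℤ).comp coeV with hg_def
  have hg : ∀ (i : ℕ) (x : Fin (m + 1) → ℤ), g i x = (e⁻¹ ^ i) (coeV x) := fun _ _ => rfl
  have Hg : ∀ (i j : ℕ) (hij : i ≤ j) (x : Fin (m + 1) → ℤ),
      g j ((U.mulVecLin ^ (j - i)) x) = g i x := by
    intro i j hij x
    rw [hg, hg, hcastp]
    rw [← hmul]
    congr 1
    obtain ⟨p, rfl⟩ := Nat.exists_eq_add_of_le hij
    rw [Nat.add_sub_cancel_left, pow_add, mul_assoc, inv_pow e p,
      inv_mul_cancel, mul_one]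
  set φ := Module.DirectLimit.lift ℤ ℕ (fun _ : ℕ => Fin (m + 1) → ℤ)
    (fun i j _ => (U.mulVecLin ^ (j - i) :
      (Fin (m + 1) → ℤ) →ₗ[ℤ] (Fin (m + 1) → ℤ))) g Hg with hφ
  have hφof : ∀ (i : ℕ) (x : Fin (m + 1) → ℤ),
      φ (Module.DirectLimit.of ℤ ℕ (fun _ : ℕ => Fin (m + 1) → ℤ)
        (fun i j _ => (U.mulVecLin ^ (j - i) :
          (Fin (m + 1) → ℤ) →ₗ[ℤ] (Fin (m + 1) → ℤ))) i x) = (e⁻¹ ^ i) (coeV x) := by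
    intro i x
    rw [hφ, Module.DirectLimit.lift_of]
    rfl
  have hcoe_inj : Function.Injective coeV := by
    intro a b hab
    funext j
    have := congrFun hab j
    rw [hcoe, hcoe] at this
    exact_mod_cast this
  have hinj : Function.Injective φ := by
    have hz : ∀ z, φ z = 0 → z = 0 := by
      intro z
      induction z using Module.DirectLimit.induction_on with
      | ih i x =>
        intro hzero
        rw [hφof] at hzero
        have hcv : coeV x = 0 := by
          have h2 := congrArg (e ^ i) hzero
          rw [← hmul, inv_pow e i, mul_inv_cancel, hone, map_zero] at h2
          exact h2
        have hx : x = 0 := hcoe_inj (by rw [hcv, map_zero])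
        rw [hx, map_zero]
    intro a b hab
    have := hz (a - b) (by rw [map_sub, hab, sub_self])
    exact sub_eq_zero.mp this
  -- the subgroup S of ℚ^(m+1)
  set S : AddSubgroup (Fin (m + 1) → ℚ) :=
    { carrier := {x | x 0 ∈ Zinv (U 0 0) ∧ ∀ j : Fin m, ∃ k : ℤ, x j.succ = (k : ℚ)}
      zero_mem' := ⟨zero_mem _, fun _ => ⟨0, by simp⟩⟩
      add_mem' := by
        rintro a b ⟨ha0, hat⟩ ⟨hb0, hbt⟩
        refine ⟨add_mem ha0 hb0, fun j => ?_⟩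
        obtain ⟨k, hk⟩ := hat j
        obtain ⟨l, hl⟩ := hbt j
        exact ⟨k + l, by simp [Pi.add_apply, hk, hl]⟩
      neg_mem' := by
        rintro a ⟨ha0, hat⟩
        refine ⟨neg_mem ha0, fun j => ?_⟩
        obtain ⟨k, hk⟩ := hat j
        exact ⟨-k, by simp [Pi.neg_apply, hk]⟩ } with hS_def
  have hSmem : ∀ (x : Fin (m + 1) → ℚ), x ∈ S ↔
      (x 0 ∈ Zinv (U 0 0) ∧ ∀ j : Fin m, ∃ k : ℤ, x j.succ = (k : ℚ)) := fun _ => Iff.rfl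
  have hZint : ∀ k : ℤ, (k : ℚ) ∈ Zinv (U 0 0) := fun k =>
    (mem_Zinv_iff h0).mpr ⟨0, k, by simp⟩
  have hZdiv : ∀ q ∈ Zinv (U 0 0), q / ((U 0 0 : ℤ) : ℚ) ∈ Zinv (U 0 0) := by
    intro q hq
    obtain ⟨i, k, rfl⟩ := (mem_Zinv_iff h0).mp hq
    exact (mem_Zinv_iff h0).mpr ⟨i + 1, k, by rw [div_div, ← pow_succ]⟩
  -- the lower-right block
  set B : Matrix (Fin m) (Fin m) ℤ := Matrix.of fun p q => U p.succ q.succ with hB_def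
  have hBu : IsUnit B.det := by
    have hBt : B.BlockTriangular id := by
      intro p q hpq
      exact hUt _ _ (Fin.succ_lt_succ_iff.mpr hpq)
    have : B.det = 1 := by
      rw [Matrix.det_of_upperTriangular hBt]
      have : ∀ p : Fin m, B p p = 1 := fun p => h1 _ (Fin.succ_ne_zero p)
      simp [this]
    simp [this]
  -- action of e on vectors with integral tail
  have happ : ∀ (x0 : ℚ) (b : Fin m → ℤ),
      e (Fin.cons x0 (fun j => (b j : ℚ))) =
        Fin.cons (((U 0 0 : ℤ) : ℚ) * x0 + ((∑ j, U 0 j.succ * b j : ℤ) : ℚ))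
          (fun p => ((B.mulVec b p : ℤ) : ℚ)) := by
    intro x0 b
    have key0 : W.mulVec (Fin.cons x0 (fun j => (b j : ℚ))) 0 =
        ((U 0 0 : ℤ) : ℚ) * x0 + ((∑ j, U 0 j.succ * b j : ℤ) : ℚ) := by
      simp only [Matrix.mulVec, dotProduct]
      rw [Fin.sum_univ_succ]
      simp only [Fin.cons_zero, Fin.cons_succ, hW, Matrix.map_apply]
      push_cast
      ring
    have keys : ∀ p : Fin m, W.mulVec (Fin.cons x0 (fun j => (b j : ℚ))) p.succ =
        ((B.mulVec b p : ℤ) : ℚ) := by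
      intro p
      simp only [Matrix.mulVec, dotProduct]
      rw [Fin.sum_univ_succ]
      simp only [Fin.cons_zero, Fin.cons_succ, hW, Matrix.map_apply,
        hUt p.succ 0 (Fin.succ_pos p), hB_def, Matrix.of_apply]
      push_cast
      simp
    funext i
    rw [he]
    refine Fin.cases ?_ (fun p => ?_) i
    · rw [key0, Fin.cons_zero]
    · rw [keys p, Fin.cons_succ]
  -- e⁻¹ preserves S
  have hstep : ∀ v ∈ S, e⁻¹ v ∈ S := by
    rintro v ⟨hv0, hvt⟩
    choose b hb using hvt
    set a : Fin m → ℤ := B⁻¹.mulVec b with ha_def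
    set c : ℤ := ∑ j, U 0 j.succ * a j with hc_def
    set x : Fin (m + 1) → ℚ :=
      Fin.cons ((v 0 - (c : ℚ)) / ((U 0 0 : ℤ) : ℚ)) (fun j => (a j : ℚ)) with hx_def
    have hex : e x = v := by
      rw [hx_def, happ]
      funext i
      refine Fin.cases ?_ (fun p => ?_) i
      · have hdc : ((U 0 0 : ℤ) : ℚ) * ((v 0 - (c : ℚ)) / ((U 0 0 : ℤ) : ℚ)) = v 0 - (c : ℚ) := by
          field_simp
        rw [Fin.cons_zero, hdc, hc_def]
        push_cast
        ring
      · rw [Fin.cons_succ]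
        rw [ha_def, Matrix.mulVec_mulVec, Matrix.mul_nonsing_inv _ hBu, Matrix.one_mulVec,
          ← hb p]
    have hxv : e⁻¹ v = x := by
      rw [← hex, hinvdef, LinearEquiv.symm_apply_apply]
    rw [hxv, hx_def]
    refine ⟨?_, fun j => ⟨a j, by rw [Fin.cons_succ]⟩⟩
    rw [Fin.cons_zero]
    exact hZdiv _ (sub_mem hv0 (hZint c))
  have claim1 : ∀ (i : ℕ) (x : Fin (m + 1) → ℤ), (e⁻¹ ^ i) (coeV x) ∈ S := by
    intro i
    induction i with
    | zero =>
      intro x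
      rw [pow_zero, hone]
      exact ⟨by rw [hcoe]; exact hZint (x 0), fun j => ⟨x j.succ, rfl⟩⟩
    | succ i ih =>
      intro x
      rw [pow_succ', hmul]
      exact hstep _ (ih x)
  have claim2 : ∀ (i : ℕ) (x : Fin (m + 1) → ℚ),
      (∃ k : ℤ, x 0 = (k : ℚ) / ((U 0 0 : ℤ) : ℚ) ^ i) →
      (∀ j : Fin m, ∃ k : ℤ, x j.succ = (k : ℚ)) →
      ∃ z : Fin (m + 1) → ℤ, coeV z = (e ^ i) x := by
    intro i
    induction i with
    | zero =>
      rintro x ⟨k, hk⟩ ht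
      choose b hb using ht
      refine ⟨Fin.cons k b, ?_⟩
      rw [pow_zero, hone]
      funext j
      refine Fin.cases ?_ (fun p => ?_) j
      · rw [hcoe, Fin.cons_zero, hk]; simp
      · rw [hcoe, Fin.cons_succ, hb]
    | succ i ih =>
      rintro x ⟨k, hk⟩ ht
      choose b hb using ht
      have hx : x = Fin.cons (x 0) (fun j => (b j : ℚ)) := by
        funext j
        refine Fin.cases ?_ (fun p => ?_) j
        · rw [Fin.cons_zero]
        · rw [Fin.cons_succ, hb]
      have h1' : (e x) 0 = ((k + (∑ j, U 0 j.succ * b j) * (U 0 0) ^ i : ℤ) : ℚ)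
          / ((U 0 0 : ℤ) : ℚ) ^ i := by
        conv_lhs => rw [hx]
        rw [happ, Fin.cons_zero, hk]
        have hpi : ((U 0 0 : ℤ) : ℚ) ^ i ≠ 0 := pow_ne_zero _ hd
        push_cast
        field_simp
        ring
      have h2' : ∀ j : Fin m, ∃ k : ℤ, (e x) j.succ = (k : ℚ) := by
        intro j
        refine ⟨B.mulVec b j, ?_⟩
        conv_lhs => rw [hx]
        rw [happ, Fin.cons_succ]
      obtain ⟨z, hz⟩ := ih (e x) ⟨_, h1'⟩ h2'
      refine ⟨z, ?_⟩
      rw [hz, pow_succ, hmul]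
  -- the range of φ is S
  set ψ := φ.toAddMonoidHom with hψ
  have hψapp : ∀ z, ψ z = φ z := fun _ => rfl
  have hrange : ψ.range = S := by
    ext v
    constructor
    · rintro ⟨z, rfl⟩
      induction z using Module.DirectLimit.induction_on with
      | ih i x =>
        rw [hψapp, hφof]
        exact claim1 i x
    · intro hv
      obtain ⟨hv0, hvt⟩ := (hSmem v).mp hv
      obtain ⟨i, k, hk⟩ := (mem_Zinv_iff h0).mp hv0
      obtain ⟨z, hz⟩ := claim2 i v ⟨k, hk⟩ hvt
      refine ⟨Module.DirectLimit.of ℤ ℕ (fun _ : ℕ => Fin (m + 1) → ℤ)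
        (fun i j _ => (U.mulVecLin ^ (j - i) :
          (Fin (m + 1) → ℤ) →ₗ[ℤ] (Fin (m + 1) → ℤ))) i z, ?_⟩
      rw [hψapp, hφof, hz, ← hmul, inv_pow, inv_mul_cancel, hone]
  -- S ≅ Zinv × ℤ^m
  have E3 : S ≃+ (Zinv (U 0 0) × (Fin m → ℤ)) :=
    { toFun := fun s => (⟨s.1 0, ((hSmem s.1).mp s.2).1⟩, fun j => (s.1 j.succ).num)
      invFun := fun p =>
        ⟨Fin.cons (p.1 : ℚ) (fun j => ((p.2 j : ℤ) : ℚ)),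
          ⟨by rw [Fin.cons_zero]; exact p.1.2, fun j => ⟨p.2 j, by rw [Fin.cons_succ]⟩⟩⟩
      left_inv := by
        intro s
        apply Subtype.ext
        funext j
        refine Fin.cases ?_ (fun p => ?_) j
        · dsimp only
          exact Fin.cons_zero _ _
        · dsimp only
          rw [Fin.cons_succ]
          obtain ⟨k, hk⟩ := ((hSmem s.1).mp s.2).2 p
          rw [hk, Rat.num_intCast]
      right_inv := by
        intro p
        refine Prod.ext ?_ ?_
        · apply Subtype.ext
          dsimp only
          exact Fin.cons_zero _ _
        · funext j
          dsimp only
          rw [Fin.cons_succ, Rat.num_intCast]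
      map_add' := by
        intro s t
        refine Prod.ext ?_ ?_
        · rfl
        · funext j
          dsimp only
          obtain ⟨k, hk⟩ := ((hSmem s.1).mp s.2).2 j
          obtain ⟨l, hl⟩ := ((hSmem t.1).mp t.2).2 j
          show ((s + t).1 j.succ).num = (s.1 j.succ).num + (t.1 j.succ).num
          have hadd : (s + t).1 j.succ = ((k + l : ℤ) : ℚ) := by
            show s.1 j.succ + t.1 j.succ = _
            rw [hk, hl]
            push_cast
            ring
          rw [hadd, hk, hl, Rat.num_intCast, Rat.num_intCast, Rat.num_intCast] }
  exact ⟨((AddMonoidHom.ofInjective (f := ψ) hinj).trans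
    (AddEquiv.addSubgroupCongr hrange)).trans E3⟩
end

section
/- Let B₂' be the 10 × 10 integer matrix with block form [[0, M₁],[0, M₂]], where M₂ is the 5 × 5 matrix with rows (2,2,2,1,1), (0,1,0,0,0), (1,2,3,1,1), (1,2,2,2,1), (1,2,2,1,2) and M₁ is any 5 × 5 integer matrix. Then the direct limit of the induced system (ℤ/2)⁵ ⊕ ℤ⁵ → (ℤ/2)⁵ ⊕ ℤ⁵ → ⋯, with each map given by B₂' acting via the block structure, is isomorphic to ℤ[1/6] ⊕ ℤ⁴. -/
namespace DLaux

def t : ℕ → ℤ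
  | 0 => 0
  | k + 1 => 6 * t k + 1

lemma t_spec (k : ℕ) : 5 * t k = 6 ^ k - 1 := by
  induction k with
  | zero => simp [t]
  | succ k ih => rw [t]; rw [pow_succ]; linarith

noncomputable def s (k : ℕ) : ℚ := -(t k) / 6 ^ k

lemma hsA (k : ℕ) : 1 + 6 * s (k + 1) = s k := by
  have h := t_spec k
  have h' : ((5 : ℚ)) * (t k : ℚ) = 6 ^ k - 1 := by exact_mod_cast congrArg (Int.cast : ℤ → ℚ) h
  have h6 : ((6 : ℚ) ^ k) ≠ 0 := by positivity
  rw [s, s, t]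
  push_cast
  field_simp
  linear_combination (-(6:ℚ)^(k+1)) * h'

lemma hsB (k : ℕ) : 1 + 5 * s k = ((6 : ℚ) ^ k)⁻¹ := by
  have h := t_spec k
  have h' : ((5 : ℚ)) * (t k : ℚ) = 6 ^ k - 1 := by exact_mod_cast congrArg (Int.cast : ℤ → ℚ) h
  have h6 : ((6 : ℚ) ^ k) ≠ 0 := by positivity
  rw [s]
  field_simp
  linear_combination -h'

lemma pow_inv_mem (k : ℕ) : ((6 : ℚ) ^ k)⁻¹ ∈ Zinv 6 := by
  apply AddSubgroup.subset_closure
  exact ⟨k, by norm_num⟩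

lemma int_mem (n : ℤ) : (n : ℚ) ∈ Zinv 6 := by
  have h1 : (1 : ℚ) ∈ Zinv 6 := by simpa using pow_inv_mem 0
  simpa using AddSubgroup.zsmul_mem _ h1 n

lemma s_mem (k : ℕ) : s k ∈ Zinv 6 := by
  have : s k = (-(t k)) • ((6 : ℚ) ^ k)⁻¹ := by
    rw [s, zsmul_eq_mul, div_eq_mul_inv]; push_cast; ring
  rw [this]
  exact AddSubgroup.zsmul_mem _ (pow_inv_mem k) _

lemma smul_s_mem (k : ℕ) (m : ℤ) : (m : ℚ) * s k ∈ Zinv 6 := by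
  have : (m : ℚ) * s k = m • s k := by rw [zsmul_eq_mul]
  rw [this]
  exact AddSubgroup.zsmul_mem _ (s_mem k) _

def wdot (x : Fin 5 → ℤ) : ℤ := x 0 + 2 * x 1 + 2 * x 2 + x 3 + x 4

lemma g_mem (k : ℕ) (x : Fin 5 → ℤ) :
    (x 0 : ℚ) + s k * (wdot x : ℤ) ∈ Zinv 6 := by
  exact add_mem (int_mem _) (by rw [mul_comm]; exact smul_s_mem k _)

abbrev X := (Fin 5 → ZMod 2) × (Fin 5 → ℤ)

noncomputable def g (k : ℕ) : X →ₗ[ℤ] (Zinv 6 × (Fin 4 → ℤ)) where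
  toFun p := (⟨(p.2 0 : ℚ) + s k * (wdot p.2 : ℤ), g_mem k p.2⟩,
    fun i : Fin 4 => p.2 i.succ - ![0, 1, 1, 1] i * p.2 0)
  map_add' p q := by
    refine Prod.ext (Subtype.ext ?_) (funext fun i => ?_)
    · show ((p.2 + q.2) 0 : ℚ) + s k * (wdot (p.2 + q.2) : ℤ) =
        ((p.2 0 : ℚ) + s k * (wdot p.2 : ℤ)) + ((q.2 0 : ℚ) + s k * (wdot q.2 : ℤ))
      simp only [Pi.add_apply, wdot]
      push_cast
      ring
    · show (p.2 + q.2) i.succ - ![0,1,1,1] i * (p.2 + q.2) 0 = _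
      simp only [Pi.add_apply, Prod.snd_add]
      show _ = (p.2 i.succ - ![0,1,1,1] i * p.2 0) + (q.2 i.succ - ![0,1,1,1] i * q.2 0)
      ring
  map_smul' n p := by
    refine Prod.ext (Subtype.ext ?_) (funext fun i => ?_)
    · show ((n • p.2) 0 : ℚ) + s k * (wdot (n • p.2) : ℤ) =
        n • ((p.2 0 : ℚ) + s k * (wdot p.2 : ℤ))
      simp only [Pi.smul_apply, smul_eq_mul, wdot, zsmul_eq_mul]
      push_cast
      ring
    · show (n • p.2) i.succ - ![0,1,1,1] i * (n • p.2) 0 =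
        n * (p.2 i.succ - ![0,1,1,1] i * p.2 0)
      simp only [Pi.smul_apply, smul_eq_mul]
      ring

end DLaux

namespace DLaux

def F (M₁ : Matrix (Fin 5) (Fin 5) ℤ) : X →ₗ[ℤ] X :=
  let M₂ : Matrix (Fin 5) (Fin 5) ℤ :=
    !![2, 2, 2, 1, 1;
       0, 1, 0, 0, 0;
       1, 2, 3, 1, 1;
       1, 2, 2, 2, 1;
       1, 2, 2, 1, 2]
  let c : ℤ →ₗ[ℤ] ZMod 2 := (Int.castRingHom (ZMod 2)).toAddMonoidHom.toIntLinearMap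
  LinearMap.prod
    ((LinearMap.pi fun i : Fin 5 =>
        c.comp ((LinearMap.proj i).comp M₁.mulVecLin)).comp
      (LinearMap.snd ℤ (Fin 5 → ZMod 2) (Fin 5 → ℤ)))
    (M₂.mulVecLin.comp (LinearMap.snd ℤ (Fin 5 → ZMod 2) (Fin 5 → ℤ)))

lemma F_snd (M₁ : Matrix (Fin 5) (Fin 5) ℤ) (p : X) (j : Fin 5) :
    (F M₁ p).2 j = ![2 * p.2 0 + 2 * p.2 1 + 2 * p.2 2 + p.2 3 + p.2 4,
      p.2 1,
      p.2 0 + 2 * p.2 1 + 3 * p.2 2 + p.2 3 + p.2 4,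
      p.2 0 + 2 * p.2 1 + 2 * p.2 2 + 2 * p.2 3 + p.2 4,
      p.2 0 + 2 * p.2 1 + 2 * p.2 2 + p.2 3 + 2 * p.2 4] j := by
  fin_cases j <;>
    simp [F, Matrix.mulVecLin_apply, Matrix.mulVec, dotProduct,
      Fin.sum_univ_five]

lemma F_snd_zero (M₁ : Matrix (Fin 5) (Fin 5) ℤ) (p : X) (hp : p.2 = 0) :
    F M₁ p = 0 := by
  have : F M₁ p = F M₁ (p.1, 0) := by rw [← hp]
  rw [this]
  have h2 : ((p.1, (0 : Fin 5 → ℤ)) : X) = (p.1, 0) := rfl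
  refine Prod.ext ?_ ?_
  · funext i
    simp [F]
  · funext i
    simp [F]

lemma g_step (M₁ : Matrix (Fin 5) (Fin 5) ℤ) (k : ℕ) (p : X) :
    g (k + 1) (F M₁ p) = g k p := by
  have hA := hsA k
  refine Prod.ext (Subtype.ext ?_) (funext fun i => ?_)
  · show ((F M₁ p).2 0 : ℚ) + s (k+1) * (wdot (F M₁ p).2 : ℤ) =
      (p.2 0 : ℚ) + s k * (wdot p.2 : ℤ)
    simp only [wdot, F_snd]
    push_cast
    push_cast
    linear_combination ((p.2 0 : ℚ) + 2 * p.2 1 + 2 * p.2 2 + p.2 3 + p.2 4) * hA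
  · show (F M₁ p).2 i.succ - ![0,1,1,1] i * (F M₁ p).2 0 =
      p.2 i.succ - ![0,1,1,1] i * p.2 0
    fin_cases i <;>
      simp [F_snd, show (Fin.succ 0 : Fin 5) = 1 from rfl, show (Fin.succ 1 : Fin 5) = 2 from rfl,
        show (Fin.succ 2 : Fin 5) = 3 from rfl, show (Fin.succ 3 : Fin 5) = 4 from rfl] <;>
      ring_nf

lemma g_compat (M₁ : Matrix (Fin 5) (Fin 5) ℤ) :
    ∀ (i j : ℕ) (hij : i ≤ j) (x : X), g j ((F M₁ ^ (j - i)) x) = g i x := by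
  have key : ∀ (d i : ℕ) (x : X), g (i + d) ((F M₁ ^ d) x) = g i x := by
    intro d
    induction d with
    | zero => intro i x; simp
    | succ d ih =>
      intro i x
      have h1 : F M₁ ^ (d + 1) = F M₁ ^ d * F M₁ := pow_succ _ _
      have h2 : i + (d + 1) = (i + 1) + d := by omega
      rw [h1, h2, Module.End.mul_apply, ih (i + 1), g_step]
  intro i j hij x
  obtain ⟨d, rfl⟩ := Nat.exists_eq_add_of_le hij
  rw [Nat.add_sub_cancel_left]
  exact key d i x

end DLaux

namespace DLaux

lemma zinv_rep (q : ℚ) (hq : q ∈ Zinv 6) :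
    ∃ (k : ℕ) (a : ℤ), q = (a : ℚ) * ((6 : ℚ) ^ k)⁻¹ := by
  let S : AddSubgroup ℚ :=
    { carrier := {q : ℚ | ∃ (k : ℕ) (a : ℤ), q = (a : ℚ) * ((6 : ℚ) ^ k)⁻¹}
      zero_mem' := ⟨0, 0, by simp⟩
      add_mem' := by
        rintro x y ⟨k, a, rfl⟩ ⟨l, b, rfl⟩
        refine ⟨k + l, a * 6 ^ l + b * 6 ^ k, ?_⟩
        have h6k : ((6 : ℚ) ^ k) ≠ 0 := by positivity
        have h6l : ((6 : ℚ) ^ l) ≠ 0 := by positivity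
        push_cast
        field_simp
        ring
      neg_mem' := by
        rintro x ⟨k, a, rfl⟩
        exact ⟨k, -a, by push_cast; ring⟩ }
  have hle : Zinv 6 ≤ S := by
    rw [Zinv, AddSubgroup.closure_le]
    rintro q ⟨i, rfl⟩
    exact ⟨i, 1, by push_cast; ring⟩
  exact hle hq

noncomputable def Glift (M₁ : Matrix (Fin 5) (Fin 5) ℤ) :
    Module.DirectLimit (fun _ : ℕ => X) (fun i j _ => F M₁ ^ (j - i)) →ₗ[ℤ]
      (Zinv 6 × (Fin 4 → ℤ)) :=
  Module.DirectLimit.lift ℤ ℕ (fun _ : ℕ => X) (fun i j _ => F M₁ ^ (j - i)) g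
    (g_compat M₁)

lemma Glift_of (M₁ : Matrix (Fin 5) (Fin 5) ℤ) (k : ℕ) (x : X) :
    Glift M₁ (Module.DirectLimit.of ℤ ℕ (fun _ : ℕ => X) (fun i j _ => F M₁ ^ (j - i)) k x) = g k x :=
  Module.DirectLimit.lift_of _ _ _

lemma Glift_surj (M₁ : Matrix (Fin 5) (Fin 5) ℤ) : Function.Surjective (Glift M₁) := by
  rintro ⟨⟨q, hq⟩, b⟩
  obtain ⟨k, a, rfl⟩ := zinv_rep q hq
  -- z1 hits (a/6^k, 0), z2 hits (0, b)
  refine ⟨Module.DirectLimit.of ℤ ℕ (fun _ : ℕ => X) (fun i j _ => F M₁ ^ (j - i)) k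
      (0, a • ![1, 0, 1, 1, 1]) +
    Module.DirectLimit.of ℤ ℕ (fun _ : ℕ => X) (fun i j _ => F M₁ ^ (j - i)) 0
      (0, ![0, b 0, b 1, b 2, b 3]), ?_⟩
  rw [map_add, Glift_of, Glift_of]
  refine Prod.ext (Subtype.ext ?_) (funext fun i => ?_)
  · show ((a • ![1, 0, 1, 1, 1] : Fin 5 → ℤ) 0 : ℚ)
        + s k * (wdot (a • ![1, 0, 1, 1, 1]) : ℤ) +
      (((![0, b 0, b 1, b 2, b 3] : Fin 5 → ℤ) 0 : ℚ)
        + s 0 * (wdot ![0, b 0, b 1, b 2, b 3] : ℤ)) = (a : ℚ) * ((6 : ℚ) ^ k)⁻¹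
    have hB := hsB k
    have hs0 : s 0 = 0 := by simp [s, t]
    simp only [wdot, hs0, Pi.smul_apply, smul_eq_mul]
    simp [Matrix.cons_val_zero, Matrix.cons_val_one]
    push_cast
    linear_combination (a : ℚ) * hB
  · show (a • ![1, 0, 1, 1, 1] : Fin 5 → ℤ) i.succ
        - ![0,1,1,1] i * (a • ![1, 0, 1, 1, 1] : Fin 5 → ℤ) 0 +
      ((![0, b 0, b 1, b 2, b 3] : Fin 5 → ℤ) i.succ
        - ![0,1,1,1] i * (![0, b 0, b 1, b 2, b 3] : Fin 5 → ℤ) 0) = b i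
    fin_cases i <;>
      simp [show (Fin.succ 0 : Fin 5) = 1 from rfl, show (Fin.succ 1 : Fin 5) = 2 from rfl,
        show (Fin.succ 2 : Fin 5) = 3 from rfl, show (Fin.succ 3 : Fin 5) = 4 from rfl]

lemma Glift_inj (M₁ : Matrix (Fin 5) (Fin 5) ℤ) : Function.Injective (Glift M₁) := by
  rw [injective_iff_map_eq_zero]
  intro z hz
  obtain ⟨k, p, rfl⟩ := Module.DirectLimit.exists_of z
  rw [Glift_of] at hz
  have h1 : (p.2 0 : ℚ) + s k * (wdot p.2 : ℤ) = 0 := by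
    have := congrArg (fun y => ((y.1 : Zinv 6) : ℚ)) hz
    simpa [g] using this
  have h2 : ∀ i : Fin 4, p.2 i.succ - ![0,1,1,1] i * p.2 0 = 0 := by
    intro i
    have := congrArg (fun y => y.2 i) hz
    simpa [g] using this
  have e1 : p.2 1 = 0 := by simpa using h2 0
  have e2 : p.2 2 = p.2 0 := by have := h2 1; simp at this; linarith
  have e3 : p.2 3 = p.2 0 := by have := h2 2; simp [show (Fin.succ 2 : Fin 5) = 3 from rfl] at this; linarith
  have e4 : p.2 4 = p.2 0 := by have := h2 3; simp [show (Fin.succ 3 : Fin 5) = 4 from rfl] at this; linarith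
  have h0 : p.2 0 = 0 := by
    have hw : (wdot p.2 : ℤ) = 5 * p.2 0 := by rw [wdot, e1, e2, e3, e4]; ring
    rw [hw] at h1
    have hB := hsB k
    have h6 : ((6 : ℚ) ^ k) ≠ 0 := by positivity
    have : (p.2 0 : ℚ) * ((6 : ℚ) ^ k)⁻¹ = 0 := by push_cast at h1 ⊢; linear_combination h1 - (p.2 0 : ℚ) * hB
    exact_mod_cast (mul_eq_zero.mp this).resolve_right (inv_ne_zero h6)
  have hp2 : p.2 = 0 := by
    funext i
    fin_cases i <;> simp_all
  have hFp : F M₁ p = 0 := F_snd_zero M₁ p hp2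
  calc Module.DirectLimit.of ℤ ℕ (fun _ : ℕ => X) (fun i j _ => F M₁ ^ (j - i)) k p
      = Module.DirectLimit.of ℤ ℕ (fun _ : ℕ => X) (fun i j _ => F M₁ ^ (j - i)) (k + 1)
        ((F M₁ ^ (k + 1 - k)) p) := (Module.DirectLimit.of_f (hij := Nat.le_succ k)).symm
    _ = 0 := by
        have : (F M₁ ^ (k + 1 - k)) p = 0 := by
          simpa [Nat.add_sub_cancel_left, pow_one] using hFp
        rw [this, map_zero]

end DLaux


/-- The direct limit of the system `(ℤ/2)⁵ ⊕ ℤ⁵ → (ℤ/2)⁵ ⊕ ℤ⁵ → ⋯`, where each map is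
`B₂' = [[0, M₁],[0, M₂]]` acting blockwise, `(u,v) ↦ (M₁v mod 2, M₂v)`, is isomorphic
to `ℤ[1/6] ⊕ ℤ⁴`, for the explicit matrix `M₂` and any integer matrix `M₁`. -/
theorem directLimit_block_system (M₁ : Matrix (Fin 5) (Fin 5) ℤ) :
    let M₂ : Matrix (Fin 5) (Fin 5) ℤ :=
      !![2, 2, 2, 1, 1;
         0, 1, 0, 0, 0;
         1, 2, 3, 1, 1;
         1, 2, 2, 2, 1;
         1, 2, 2, 1, 2]
    let c : ℤ →ₗ[ℤ] ZMod 2 := (Int.castRingHom (ZMod 2)).toAddMonoidHom.toIntLinearMap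
    let f : ((Fin 5 → ZMod 2) × (Fin 5 → ℤ)) →ₗ[ℤ] ((Fin 5 → ZMod 2) × (Fin 5 → ℤ)) :=
      LinearMap.prod
        ((LinearMap.pi fun i : Fin 5 =>
            c.comp ((LinearMap.proj i).comp M₁.mulVecLin)).comp
          (LinearMap.snd ℤ (Fin 5 → ZMod 2) (Fin 5 → ℤ)))
        (M₂.mulVecLin.comp (LinearMap.snd ℤ (Fin 5 → ZMod 2) (Fin 5 → ℤ)))
    Nonempty
      ((Module.DirectLimit (fun _ : ℕ => (Fin 5 → ZMod 2) × (Fin 5 → ℤ))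
          (fun i j _ => (f ^ (j - i) :
            ((Fin 5 → ZMod 2) × (Fin 5 → ℤ)) →ₗ[ℤ] ((Fin 5 → ZMod 2) × (Fin 5 → ℤ)))))
        ≃+ (Zinv 6 × (Fin 4 → ℤ))) := by
  intro M₂ c f
  exact ⟨AddEquiv.ofBijective (DLaux.Glift M₁).toAddMonoidHom
    ⟨DLaux.Glift_inj M₁, DLaux.Glift_surj M₁⟩⟩
end
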